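/- Let X be a symmetric random variable with E[X²] = 1 and g : ℝ → ℝ three times continuously differentiable with suitable integrability. Then E[X g(X)] = E[g'(X)] + E[(X² − 1) ∫_0^X g''(u) du] − (1/4) E[ |X| ∫_{−|X|}^{|X|} (X² − u²) g'''(u) du ]. -/

import Mathlib

open MeasureTheory ProbabilityTheory

section Aux

variable {g : ℝ → ℝ}

private lemma e2' (g : ℝ → ℝ) : iteratedDeriv 2 g = deriv (deriv g) := by
  rw [show (2:ℕ) = 1 + 1 from rfl, iteratedDeriv_succ, iteratedDeriv_one]

private lemma e3' (g : ℝ → ℝ) : iteratedDeriv 3 g = deriv (iteratedDeriv 2 g) := by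
  rw [show (3:ℕ) = 2 + 1 from rfl, iteratedDeriv_succ]

private lemma hd1' (hg : ContDiff ℝ 3 g) (x : ℝ) : HasDerivAt g (deriv g x) x :=
  ((hg.differentiable (by norm_num)) x).hasDerivAt

private lemma hd2' (hg : ContDiff ℝ 3 g) (x : ℝ) :
    HasDerivAt (deriv g) (iteratedDeriv 2 g x) x := by
  have hdiff : Differentiable ℝ (deriv g) :=
    by have h := hg.differentiable_iteratedDeriv 1 (by norm_num)
       rwa [iteratedDeriv_one] at h
  rw [e2' g]
  exact (hdiff x).hasDerivAt

private lemma hd3' (hg : ContDiff ℝ 3 g) (x : ℝ) :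
    HasDerivAt (iteratedDeriv 2 g) (iteratedDeriv 3 g x) x := by
  rw [e3' g]
  exact ((hg.differentiable_iteratedDeriv 2 (by norm_num)) x).hasDerivAt

private lemma ftc1' (hg : ContDiff ℝ 3 g) (a b : ℝ) :
    ∫ u in a..b, deriv g u = g b - g a :=
  intervalIntegral.integral_eq_sub_of_hasDerivAt (fun x _ => hd1' hg x)
    ((hg.continuous_deriv (by norm_num)).intervalIntegrable a b)

private lemma ftc2' (hg : ContDiff ℝ 3 g) (a b : ℝ) :
    ∫ u in a..b, iteratedDeriv 2 g u = deriv g b - deriv g a :=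
  intervalIntegral.integral_eq_sub_of_hasDerivAt (fun x _ => hd2' hg x)
    ((hg.continuous_iteratedDeriv 2 (by norm_num)).intervalIntegrable a b)

private lemma keyD' (hg : ContDiff ℝ 3 g) (t : ℝ) :
    ∫ u in (-t)..t, (t^2 - u^2) * iteratedDeriv 3 g u
      = 2*t*(deriv g t + deriv g (-t)) - 2*(g t - g (-t)) := by
  have hc2 : Continuous (iteratedDeriv 2 g) := hg.continuous_iteratedDeriv 2 (by norm_num)
  have hc3 : Continuous (iteratedDeriv 3 g) := hg.continuous_iteratedDeriv 3 (by norm_num)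
  have hu : ∀ y ∈ Set.uIcc (-t) t, HasDerivAt (fun z : ℝ => t^2 - z^2) (-(2*y)) y := by
    intro y _
    have h1 : HasDerivAt (fun z : ℝ => z^2) (2*y) y := by simpa using hasDerivAt_pow 2 y
    exact ((hasDerivAt_const y (t^2)).sub h1).congr_deriv (by ring)
  have step1 := intervalIntegral.integral_mul_deriv_eq_deriv_mul
    (u := fun z : ℝ => t^2 - z^2) (u' := fun z : ℝ => -(2*z))
    (v := iteratedDeriv 2 g) (v' := iteratedDeriv 3 g)
    hu (fun x _ => hd3' hg x)
    (by apply Continuous.intervalIntegrable; continuity)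
    (hc3.intervalIntegrable _ _)
  have hu2 : ∀ y ∈ Set.uIcc (-t) t, HasDerivAt (fun z : ℝ => 2*z) (2:ℝ) y := by
    intro y _
    simpa using (hasDerivAt_id y).const_mul (2:ℝ)
  have step2 := intervalIntegral.integral_mul_deriv_eq_deriv_mul
    (u := fun z : ℝ => 2*z) (u' := fun _ : ℝ => (2:ℝ))
    (v := deriv g) (v' := iteratedDeriv 2 g)
    hu2 (fun x _ => hd2' hg x)
    (intervalIntegrable_const)
    (hc2.intervalIntegrable _ _)
  have step3 : ∫ x in (-t)..t, (2:ℝ) * deriv g x = 2 * (g t - g (-t)) := by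
    rw [intervalIntegral.integral_const_mul, ftc1' hg]
  have hneg : ∫ x in (-t)..t, (-(2*x)) * iteratedDeriv 2 g x
      = - ∫ x in (-t)..t, (2*x) * iteratedDeriv 2 g x := by
    rw [← intervalIntegral.integral_neg]
    congr 1
    funext x
    ring
  rw [step1, hneg, step2, step3]
  ring

end Aux

section Sym

variable {Ω : Type*} [MeasurableSpace Ω] {μ : Measure Ω} {X : Ω → ℝ}

private lemma sym_eq' (hXm : Measurable X)
    (hsym : Measure.map X μ = Measure.map (fun ω => -X ω) μ)
    {f : ℝ → ℝ} (hf : Continuous f) :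
    ∫ ω, f (X ω) ∂μ = ∫ ω, f (-X ω) ∂μ := by
  rw [← integral_map hXm.aemeasurable hf.aestronglyMeasurable, hsym,
    integral_map (φ := fun ω => -X ω) (hXm.neg).aemeasurable hf.aestronglyMeasurable]

private lemma sym_int' (hXm : Measurable X)
    (hsym : Measure.map X μ = Measure.map (fun ω => -X ω) μ)
    {f : ℝ → ℝ} (hf : Continuous f)
    (hi : Integrable (fun ω => f (X ω)) μ) :
    Integrable (fun ω => f (-X ω)) μ := by
  have h1 : Integrable f (μ.map X) :=
    (integrable_map_measure hf.aestronglyMeasurable hXm.aemeasurable).mpr hi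
  rw [hsym] at h1
  exact (integrable_map_measure hf.aestronglyMeasurable hXm.neg.aemeasurable).mp h1

end Sym

/-- For a symmetric random variable `X` with `E[X²] = 1` and `g ∈ C³`:
`E[X g(X)] = E[g'(X)] + E[(X² − 1) ∫_0^X g''] − (1/4) E[|X| ∫_{−|X|}^{|X|} (X² − u²) g'''(u) du]`. -/
theorem symmetric_integration_by_parts_unit_variance
    {Ω : Type*} [MeasurableSpace Ω] (μ : Measure Ω) [IsProbabilityMeasure μ]
    (X : Ω → ℝ) (hXm : Measurable X)
    (hsym : Measure.map X μ = Measure.map (fun ω => -X ω) μ)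
    (hX2 : Integrable (fun ω => (X ω) ^ 2) μ)
    (hvar : ∫ ω, (X ω) ^ 2 ∂μ = 1)
    (g : ℝ → ℝ) (hg : ContDiff ℝ 3 g)
    (h1 : Integrable (fun ω => X ω * g (X ω)) μ)
    (h2 : Integrable (fun ω => deriv g (X ω)) μ)
    (h3 : Integrable (fun ω =>
      (((X ω) ^ 2 - 1) * ∫ u in (0:ℝ)..(X ω), iteratedDeriv 2 g u)) μ)
    (h4 : Integrable (fun ω =>
      (|X ω| * ∫ u in (-|X ω|)..(|X ω|), ((X ω) ^ 2 - u ^ 2) * iteratedDeriv 3 g u)) μ) :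
    ∫ ω, X ω * g (X ω) ∂μ
      = (∫ ω, deriv g (X ω) ∂μ)
        + (∫ ω, (((X ω) ^ 2 - 1) * ∫ u in (0:ℝ)..(X ω), iteratedDeriv 2 g u) ∂μ)
        - (1 / 4) * ∫ ω,
            (|X ω| * ∫ u in (-|X ω|)..(|X ω|), ((X ω) ^ 2 - u ^ 2) * iteratedDeriv 3 g u) ∂μ := by
  have hgc : Continuous g := hg.continuous
  have hd1c : Continuous (deriv g) := hg.continuous_deriv (by norm_num)
  -- closed forms
  have hftc : ∀ x : ℝ, (x ^ 2 - 1) * ∫ u in (0:ℝ)..x, iteratedDeriv 2 g u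
      = (x ^ 2 - 1) * (deriv g x - deriv g 0) := fun x => by rw [ftc2' hg]
  have habs : ∀ x : ℝ, |x| * ∫ u in (-|x|)..(|x|), (x ^ 2 - u ^ 2) * iteratedDeriv 3 g u
      = 2*x^2*(deriv g x + deriv g (-x)) - 2*x*(g x - g (-x)) := by
    intro x
    have h := keyD' hg |x|
    rw [sq_abs] at h
    rw [h]
    rcases abs_cases x with ⟨hx, _⟩ | ⟨hx, _⟩ <;> rw [hx] <;>
      first
        | ring
        | (simp only [neg_neg]; ring)
  simp only [hftc] at h3 ⊢
  simp only [habs] at h4 ⊢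
  -- continuity of the four integrands
  have hc1 : Continuous (fun x : ℝ => x * g x) := continuous_id.mul hgc
  have hc3 : Continuous (fun x : ℝ => (x ^ 2 - 1) * (deriv g x - deriv g 0)) :=
    (((continuous_pow 2).sub continuous_const)).mul (hd1c.sub continuous_const)
  have hc4 : Continuous
      (fun x : ℝ => 2*x^2*(deriv g x + deriv g (-x)) - 2*x*(g x - g (-x))) :=
    ((continuous_const.mul (continuous_pow 2)).mul
      (hd1c.add (hd1c.comp continuous_neg))).sub
    ((continuous_const.mul continuous_id).mul (hgc.sub (hgc.comp continuous_neg)))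
  -- symmetry facts
  have e1 : ∫ ω, X ω * g (X ω) ∂μ = ∫ ω, (-X ω) * g (-X ω) ∂μ :=
    sym_eq' hXm hsym hc1
  have e2 : ∫ ω, deriv g (X ω) ∂μ = ∫ ω, deriv g (-X ω) ∂μ :=
    sym_eq' hXm hsym hd1c
  have e3 : ∫ ω, ((X ω) ^ 2 - 1) * (deriv g (X ω) - deriv g 0) ∂μ
      = ∫ ω, ((-X ω) ^ 2 - 1) * (deriv g (-X ω) - deriv g 0) ∂μ :=
    sym_eq' hXm hsym hc3
  have e4 : ∫ ω, (2*(X ω)^2*(deriv g (X ω) + deriv g (-X ω))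
        - 2*(X ω)*(g (X ω) - g (-X ω))) ∂μ
      = ∫ ω, (2*(-X ω)^2*(deriv g (-X ω) + deriv g (-(-X ω)))
        - 2*(-X ω)*(g (-X ω) - g (-(-X ω)))) ∂μ :=
    sym_eq' hXm hsym hc4
  have i1 : Integrable (fun ω => (-X ω) * g (-X ω)) μ := sym_int' hXm hsym hc1 h1
  have i2 : Integrable (fun ω => deriv g (-X ω)) μ := sym_int' hXm hsym hd1c h2
  have i3 : Integrable (fun ω => ((-X ω) ^ 2 - 1) * (deriv g (-X ω) - deriv g 0)) μ :=
    sym_int' hXm hsym hc3 h3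
  have i4 : Integrable (fun ω => 2*(-X ω)^2*(deriv g (-X ω) + deriv g (-(-X ω)))
        - 2*(-X ω)*(g (-X ω) - g (-(-X ω)))) μ :=
    sym_int' hXm hsym hc4 h4
  have hX21 : Integrable (fun ω => (X ω) ^ 2 - 1) μ := hX2.sub (integrable_const 1)
  have E0 : ∫ ω, ((X ω) ^ 2 - 1) ∂μ = 0 := by
    rw [integral_sub hX2 (integrable_const 1), hvar]
    simp
  -- grouped integrable facts
  have m1 : Integrable (fun ω => X ω * g (X ω) + (-X ω) * g (-X ω)) μ := h1.add i1
  have m2 : Integrable (fun ω => deriv g (X ω) + deriv g (-X ω)) μ := h2.add i2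
  have m3 : Integrable (fun ω => ((X ω) ^ 2 - 1) * (deriv g (X ω) - deriv g 0)
      + ((-X ω) ^ 2 - 1) * (deriv g (-X ω) - deriv g 0)) μ := h3.add i3
  have m4 : Integrable (fun ω =>
      (2*(X ω)^2*(deriv g (X ω) + deriv g (-X ω)) - 2*(X ω)*(g (X ω) - g (-X ω)))
      + (2*(-X ω)^2*(deriv g (-X ω) + deriv g (-(-X ω)))
        - 2*(-X ω)*(g (-X ω) - g (-(-X ω))))) μ := h4.add i4
  have mX : Integrable (fun ω => (2 * deriv g 0) * ((X ω) ^ 2 - 1)) μ := hX21.const_mul _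
  have m23 : Integrable (fun ω => (deriv g (X ω) + deriv g (-X ω))
      + (((X ω) ^ 2 - 1) * (deriv g (X ω) - deriv g 0)
        + ((-X ω) ^ 2 - 1) * (deriv g (-X ω) - deriv g 0))) μ := m2.add m3
  have m23X : Integrable (fun ω => (deriv g (X ω) + deriv g (-X ω))
      + (((X ω) ^ 2 - 1) * (deriv g (X ω) - deriv g 0)
        + ((-X ω) ^ 2 - 1) * (deriv g (-X ω) - deriv g 0))
      + (2 * deriv g 0) * ((X ω) ^ 2 - 1)) μ := m23.add mX
  have m4' : Integrable (fun ω => (1/4 : ℝ) * (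
      (2*(X ω)^2*(deriv g (X ω) + deriv g (-X ω)) - 2*(X ω)*(g (X ω) - g (-X ω)))
      + (2*(-X ω)^2*(deriv g (-X ω) + deriv g (-(-X ω)))
        - 2*(-X ω)*(g (-X ω) - g (-(-X ω)))))) μ := m4.const_mul _
  -- pointwise identity
  have key : ∀ x : ℝ, x * g x + (-x) * g (-x)
      = (deriv g x + deriv g (-x))
        + ((x ^ 2 - 1) * (deriv g x - deriv g 0)
          + ((-x) ^ 2 - 1) * (deriv g (-x) - deriv g 0))
        + (2 * deriv g 0) * (x ^ 2 - 1)
        - (1/4) * ((2*x^2*(deriv g x + deriv g (-x)) - 2*x*(g x - g (-x)))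
          + (2*(-x)^2*(deriv g (-x) + deriv g (-(-x)))
            - 2*(-x)*(g (-x) - g (-(-x))))) := by
    intro x
    simp only [neg_neg]
    ring
  -- integrate the pointwise identity
  have big : ∫ ω, (X ω * g (X ω) + (-X ω) * g (-X ω)) ∂μ
      = ∫ ω, ((deriv g (X ω) + deriv g (-X ω))
          + (((X ω) ^ 2 - 1) * (deriv g (X ω) - deriv g 0)
            + ((-X ω) ^ 2 - 1) * (deriv g (-X ω) - deriv g 0))
          + (2 * deriv g 0) * ((X ω) ^ 2 - 1)
          - (1/4) * ((2*(X ω)^2*(deriv g (X ω) + deriv g (-X ω))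
              - 2*(X ω)*(g (X ω) - g (-X ω)))
            + (2*(-X ω)^2*(deriv g (-X ω) + deriv g (-(-X ω)))
              - 2*(-X ω)*(g (-X ω) - g (-(-X ω)))))) ∂μ := by
    congr 1
    funext ω
    exact key (X ω)
  rw [integral_add h1 i1, ← e1] at big
  rw [integral_sub m23X m4',
      integral_add m23 mX,
      integral_add m2 m3,
      integral_add h2 i2, integral_add h3 i3,
      integral_const_mul, integral_const_mul, E0,
      integral_add h4 i4, ← e2, ← e3, ← e4] at big
  linarith
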